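/- There exist no differentiable functions α, β, γ, μ, ν : [0,∞) → ℝ forming an admissible solution of System A on all of [0,∞). (Equivalently: every homogeneous Ricci flow on SO(3)⋉ℝ³/SO(2), written in these coordinates, has a finite-time extinction.) -/

import Mathlib

open Set

open Set

lemma anti_Ici {a : ℝ} {f f' : ℝ → ℝ}
    (hf : ∀ t ∈ Ici a, HasDerivWithinAt f (f' t) (Ici a) t)
    (h0 : ∀ t ∈ Ici a, f' t ≤ 0) : AntitoneOn f (Ici a) := by
  apply antitoneOn_of_hasDerivWithinAt_nonpos (convex_Ici a)
    (fun t ht => (hf t ht).continuousWithinAt)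
  · intro t ht
    rw [interior_Ici] at ht
    exact ((hf t (Ioi_subset_Ici_self ht)).mono (by rw [interior_Ici]; exact Ioi_subset_Ici_self))
  · intro t ht
    rw [interior_Ici] at ht
    exact h0 t (Ioi_subset_Ici_self ht)

lemma mono_Ici {a : ℝ} {f f' : ℝ → ℝ}
    (hf : ∀ t ∈ Ici a, HasDerivWithinAt f (f' t) (Ici a) t)
    (h0 : ∀ t ∈ Ici a, 0 ≤ f' t) : MonotoneOn f (Ici a) := by
  apply monotoneOn_of_hasDerivWithinAt_nonneg (convex_Ici a)
    (fun t ht => (hf t ht).continuousWithinAt)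
  · intro t ht
    rw [interior_Ici] at ht
    exact ((hf t (Ioi_subset_Ici_self ht)).mono (by rw [interior_Ici]; exact Ioi_subset_Ici_self))
  · intro t ht
    rw [interior_Ici] at ht
    exact h0 t (Ioi_subset_Ici_self ht)

lemma sq_max_hasDerivAt (y : ℝ) : HasDerivAt (fun z : ℝ => max z 0 ^ 2) (2 * max y 0) y := by
  rcases lt_trichotomy y 0 with hy | hy | hy
  · have h : (fun z : ℝ => max z 0 ^ 2) =ᶠ[nhds y] fun _ => (0:ℝ) := by
      filter_upwards [eventually_lt_nhds hy] with z hz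
      simp [max_eq_right hz.le]
    rw [max_eq_right hy.le, mul_zero]
    exact (hasDerivAt_const y (0:ℝ)).congr_of_eventuallyEq h
  · subst hy
    rw [max_self, mul_zero]
    rw [hasDerivAt_iff_isLittleO]
    have hb : ∀ x : ℝ, ‖max x 0 ^ 2‖ ≤ ‖x ^ 2‖ := by
      intro x
      rcases le_or_gt x 0 with h | h
      · simp only [max_eq_right h]
        rw [Real.norm_eq_abs, Real.norm_eq_abs]
        norm_num [abs_nonneg]
        positivity
      · simp [max_eq_left h.le]
    have h1 : (fun x : ℝ => max x 0 ^ 2) =O[nhds 0] fun x => x ^ 2 :=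
      Asymptotics.IsBigO.of_bound' (Filter.Eventually.of_forall hb)
    have h2 : (fun x : ℝ => x ^ 2) =o[nhds 0] fun x => x := by
      have := Asymptotics.isLittleO_pow_id (𝕜 := ℝ) (n := 2) (by norm_num)
      simpa using this
    have h3 : (fun x : ℝ => max x 0 ^ 2) =o[nhds (0:ℝ)] fun x => x := h1.trans_isLittleO h2
    simpa using h3
  · have h : (fun z : ℝ => max z 0 ^ 2) =ᶠ[nhds y] fun z => z ^ 2 := by
      filter_upwards [eventually_gt_nhds hy] with z hz
      simp [max_eq_left hz.le]
    rw [max_eq_left hy.le]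
    have h2 : HasDerivAt (fun z : ℝ => z ^ 2) (2 * y) y := by
      simpa using (hasDerivAt_pow 2 y)
    exact h2.congr_of_eventuallyEq h

lemma barrier_above {a c : ℝ} {f f' : ℝ → ℝ}
    (hf : ∀ t ∈ Ici a, HasDerivWithinAt f (f' t) (Ici a) t)
    (h : ∀ t ∈ Ici a, c ≤ f t → f' t ≤ 0) :
    ∀ t ∈ Ici a, f t ≤ max (f a) c := by
  set c' := max (f a) c with hc'
  intro t ht
  have hN : ∀ u ∈ Ici a, HasDerivWithinAt (fun z => max (f z - c') 0 ^ 2)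
      (2 * max (f u - c') 0 * (f' u)) (Ici a) u := by
    intro u hu
    have := (sq_max_hasDerivAt (f u - c')).comp_hasDerivWithinAt u
      ((hf u hu).sub_const c')
    simpa [mul_comm, Function.comp_def] using this
  have hN0 : ∀ u ∈ Ici a, 2 * max (f u - c') 0 * (f' u) ≤ 0 := by
    intro u hu
    rcases le_or_gt (f u) c' with h1 | h1
    · simp [max_eq_right (by linarith : f u - c' ≤ 0)]
    · have hc : c ≤ f u := le_trans (le_max_right _ _) h1.le
      have := h u hu hc
      have hm : 0 ≤ max (f u - c') 0 := le_max_right _ _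
      nlinarith
  have hanti := anti_Ici hN hN0
  have := hanti (self_mem_Ici) ht ht
  have ha0 : max (f a - c') 0 = 0 := max_eq_right (by simp [hc'])
  have h1 : max (f t - c') 0 ^ 2 ≤ 0 := by simpa [ha0] using this
  have h2 : max (f t - c') 0 = 0 := by nlinarith [le_max_right (f t - c') 0]
  have := le_max_left (f t - c') 0
  rw [h2] at this
  linarith

lemma barrier_below {a c : ℝ} {f f' : ℝ → ℝ}
    (hf : ∀ t ∈ Ici a, HasDerivWithinAt f (f' t) (Ici a) t)
    (h : ∀ t ∈ Ici a, f t ≤ c → 0 ≤ f' t) :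
    ∀ t ∈ Ici a, min (f a) c ≤ f t := by
  have hneg : ∀ t ∈ Ici a, HasDerivWithinAt (fun z => -f z) (-(f' t)) (Ici a) t :=
    fun t ht => (hf t ht).neg
  have h' : ∀ t ∈ Ici a, -c ≤ -f t → -(f' t) ≤ 0 := by
    intro t ht hc
    have := h t ht (by linarith)
    linarith
  have := barrier_above hneg h'
  intro t ht
  have h2 := this t ht
  rcases le_max_iff.mp h2 with h3 | h3
  · exact le_trans (min_le_left _ _) (by linarith)
  · exact le_trans (min_le_right _ _) (by linarith)

/-- **System A**: the homogeneous Ricci flow equations on `SO(3) ⋉ ℝ³ / SO(2)` for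
real-valued differentiable functions `α β γ μ ν` on a set `s`, with `τ := μ² + ν²`,
together with the admissibility conditions `α > 0`, `β > 0`, `γ > 0`, `βγ > τ`. -/
def IsAdmissibleSolutionA (α β γ μ ν : ℝ → ℝ) (s : Set ℝ) : Prop :=
  ∀ t ∈ s,
    0 < α t ∧ 0 < β t ∧ 0 < γ t ∧
    μ t ^ 2 + ν t ^ 2 < β t * γ t ∧
    HasDerivWithinAt α
      (2 * (β t ^ 2 - α t ^ 2) / (β t * γ t - (μ t ^ 2 + ν t ^ 2)) -
        4 * α t ^ 2 * ν t ^ 2 / (β t * γ t - (μ t ^ 2 + ν t ^ 2)) ^ 2) s t ∧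
    HasDerivWithinAt β
      (β t / α t * ((α t ^ 2 - β t ^ 2) / (β t * γ t - (μ t ^ 2 + ν t ^ 2)))) s t ∧
    HasDerivWithinAt γ
      (-4 + 2 * β t / α t +
        γ t / α t * ((α t ^ 2 - β t ^ 2) / (β t * γ t - (μ t ^ 2 + ν t ^ 2)))) s t ∧
    HasDerivWithinAt μ
      (μ t * (α t ^ 2 - β t ^ 2) / (α t * (β t * γ t - (μ t ^ 2 + ν t ^ 2)))) s t ∧
    HasDerivWithinAt ν
      (-(ν t * (α t ^ 2 + β t ^ 2)) / (α t * (β t * γ t - (μ t ^ 2 + ν t ^ 2)))) s t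


def Df (β γ μ ν : ℝ → ℝ) : ℝ → ℝ := fun t => β t * γ t - (μ t ^ 2 + ν t ^ 2)

structure Core (α β γ μ ν : ℝ → ℝ) (t : ℝ) : Prop where
  hα : 0 < α t
  hβ : 0 < β t
  hγ : 0 < γ t
  hd : 0 < Df β γ μ ν t
  hD' : HasDerivWithinAt (Df β γ μ ν)
    (2*α t - 4*β t + 4*α t*ν t^2/(Df β γ μ ν t)) (Set.Ici 0) t
  hk' : HasDerivWithinAt (fun u => ν u^2 / Df β γ μ ν u)
    (-(2*ν t^2*α t/(Df β γ μ ν t)^2) * (1 + (1 - β t/α t)^2 + 2*ν t^2/(Df β γ μ ν t)))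
    (Set.Ici 0) t
  hL' : HasDerivWithinAt (fun u => Real.log (β u) - Real.log (α u))
    (3*(α t^2 - β t^2)/(α t * Df β γ μ ν t) + 4*α t*ν t^2/(Df β γ μ ν t)^2) (Set.Ici 0) t
  ha' : HasDerivWithinAt (fun u => Real.log (α u))
    (-(2/3)*(3*(α t^2 - β t^2)/(α t * Df β γ μ ν t) + 4*α t*ν t^2/(Df β γ μ ν t)^2)
      - (4/3)*(α t*ν t^2/(Df β γ μ ν t)^2)) (Set.Ici 0) t

lemma core {α β γ μ ν : ℝ → ℝ} (H : IsAdmissibleSolutionA α β γ μ ν (Set.Ici 0))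
    {t : ℝ} (ht : t ∈ Set.Ici (0:ℝ)) : Core α β γ μ ν t := by
  obtain ⟨hα, hβ, hγ, hτ, hα', hβ', hγ', hμ', hν'⟩ := H t ht
  have hd : 0 < Df β γ μ ν t := by simp only [Df]; linarith
  have hdne : Df β γ μ ν t ≠ 0 := ne_of_gt hd
  have hdne' : β t * γ t - (μ t ^ 2 + ν t ^ 2) ≠ 0 := by
    simpa [Df] using hdne
  have hαne : α t ≠ 0 := ne_of_gt hα
  have hβne : β t ≠ 0 := ne_of_gt hβ
  -- derivative of D
  have hD0 : HasDerivWithinAt (Df β γ μ ν)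
      ((β t / α t * ((α t ^ 2 - β t ^ 2) / (β t * γ t - (μ t ^ 2 + ν t ^ 2)))) * γ t
        + β t * (-4 + 2 * β t / α t +
          γ t / α t * ((α t ^ 2 - β t ^ 2) / (β t * γ t - (μ t ^ 2 + ν t ^ 2))))
        - (2 * μ t ^ 1 * (μ t * (α t ^ 2 - β t ^ 2) / (α t * (β t * γ t - (μ t ^ 2 + ν t ^ 2))))
          + 2 * ν t ^ 1 * (-(ν t * (α t ^ 2 + β t ^ 2)) / (α t * (β t * γ t - (μ t ^ 2 + ν t ^ 2))))))
      (Set.Ici 0) t := by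
    exact ((hβ'.mul hγ').sub ((hμ'.pow 2).add (hν'.pow 2)))
  have hD' : HasDerivWithinAt (Df β γ μ ν)
      (2*α t - 4*β t + 4*α t*ν t^2/(Df β γ μ ν t)) (Set.Ici 0) t := by
    convert hD0 using 1
    simp only [Df, pow_one]
    field_simp
    ring
  -- derivative of k
  have hk' : HasDerivWithinAt (fun u => ν u^2 / Df β γ μ ν u)
      (-(2*ν t^2*α t/(Df β γ μ ν t)^2) * (1 + (1 - β t/α t)^2 + 2*ν t^2/(Df β γ μ ν t)))
      (Set.Ici 0) t := by
    have h0 := (hν'.pow 2).div hD' hdne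
    refine h0.congr_deriv ?_
    simp only [Df, pow_one, Pi.pow_apply, Nat.cast_ofNat, Nat.reduceSub]
    field_simp
    ring
  -- derivative of L
  have hL' : HasDerivWithinAt (fun u => Real.log (β u) - Real.log (α u))
      (3*(α t^2 - β t^2)/(α t * Df β γ μ ν t) + 4*α t*ν t^2/(Df β γ μ ν t)^2) (Set.Ici 0) t := by
    have h0 := (hβ'.log hβne).sub (hα'.log hαne)
    refine h0.congr_deriv ?_
    simp only [Df]
    field_simp
    ring
  -- derivative of log α
  have ha' : HasDerivWithinAt (fun u => Real.log (α u))
      (-(2/3)*(3*(α t^2 - β t^2)/(α t * Df β γ μ ν t) + 4*α t*ν t^2/(Df β γ μ ν t)^2)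
        - (4/3)*(α t*ν t^2/(Df β γ μ ν t)^2)) (Set.Ici 0) t := by
    have h0 := hα'.log hαne
    convert h0 using 1
    simp only [Df]
    field_simp
    ring
  exact ⟨hα, hβ, hγ, hd, hD', hk', hL', ha'⟩

noncomputable section

def kf (β γ μ ν : ℝ → ℝ) : ℝ → ℝ := fun t => ν t ^ 2 / Df β γ μ ν t
def Lf (α β : ℝ → ℝ) : ℝ → ℝ := fun u => Real.log (β u) - Real.log (α u)

lemma kf_nonneg {α β γ μ ν : ℝ → ℝ} (H : IsAdmissibleSolutionA α β γ μ ν (Set.Ici 0))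
    {t : ℝ} (ht : t ∈ Set.Ici (0:ℝ)) : 0 ≤ kf β γ μ ν t :=
  div_nonneg (sq_nonneg _) (core H ht).hd.le

/-- The canonical formula for the derivative of `k`. -/
def KEx (α β γ μ ν : ℝ → ℝ) (t : ℝ) : ℝ :=
  -(2*ν t^2*α t/(Df β γ μ ν t)^2) * (1 + (1 - β t/α t)^2 + 2*ν t^2/(Df β γ μ ν t))

def LEx (α β γ μ ν : ℝ → ℝ) (t : ℝ) : ℝ :=
  3*(α t^2 - β t^2)/(α t * Df β γ μ ν t) + 4*α t*ν t^2/(Df β γ μ ν t)^2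

lemma KEx_le {α β γ μ ν : ℝ → ℝ} (H : IsAdmissibleSolutionA α β γ μ ν (Set.Ici 0))
    {t : ℝ} (ht : t ∈ Set.Ici (0:ℝ)) :
    KEx α β γ μ ν t ≤ -(2*ν t^2*α t/(Df β γ μ ν t)^2) := by
  obtain ⟨hα, hβ, hγ, hd, _, _, _, _⟩ := core H ht
  have h1 : (0:ℝ) ≤ 2*ν t^2*α t/(Df β γ μ ν t)^2 := by positivity
  have h2 : (0:ℝ) ≤ (1 - β t/α t)^2 + 2*ν t^2/(Df β γ μ ν t) := by positivity
  unfold KEx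
  nlinarith

lemma KEx_nonpos {α β γ μ ν : ℝ → ℝ} (H : IsAdmissibleSolutionA α β γ μ ν (Set.Ici 0))
    {t : ℝ} (ht : t ∈ Set.Ici (0:ℝ)) : KEx α β γ μ ν t ≤ 0 := by
  refine le_trans (KEx_le H ht) ?_
  obtain ⟨hα, hβ, hγ, hd, _, _, _, _⟩ := core H ht
  have h1 : (0:ℝ) ≤ 2*ν t^2*α t/(Df β γ μ ν t)^2 := by positivity
  linarith

lemma k_antitone {α β γ μ ν : ℝ → ℝ} (H : IsAdmissibleSolutionA α β γ μ ν (Set.Ici 0)) :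
    AntitoneOn (kf β γ μ ν) (Set.Ici 0) :=
  anti_Ici (fun t ht => (core H ht).hk') (fun t ht => KEx_nonpos H ht)

lemma beta_ge_of_L {α β : ℝ → ℝ} {t c : ℝ} (hα : 0 < α t) (hβ : 0 < β t) (hc : 0 < c)
    (h : Real.log c ≤ Lf α β t) : c * α t ≤ β t := by
  have h2 : Real.log (c * α t) ≤ Real.log (β t) := by
    rw [Real.log_mul (ne_of_gt hc) (ne_of_gt hα)]
    unfold Lf at h; linarith
  exact (Real.log_le_log_iff (by positivity) hβ).mp h2

lemma beta_le_of_L {α β : ℝ → ℝ} {t c : ℝ} (hα : 0 < α t) (hβ : 0 < β t) (hc : 0 < c)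
    (h : Lf α β t ≤ Real.log c) : β t ≤ c * α t := by
  have h2 : Real.log (β t) ≤ Real.log (c * α t) := by
    rw [Real.log_mul (ne_of_gt hc) (ne_of_gt hα)]
    unfold Lf at h; linarith
  exact (Real.log_le_log_iff hβ (by positivity)).mp h2

/-- Upper bound on `L = log (β/α)` via the barrier `V = L + 2k`. -/
lemma L_ub {α β γ μ ν : ℝ → ℝ} (H : IsAdmissibleSolutionA α β γ μ ν (Set.Ici 0)) :
    ∀ t ∈ Set.Ici (0:ℝ), Lf α β t ≤
      max (Lf α β 0 + 2 * kf β γ μ ν 0) (2 * kf β γ μ ν 0) := by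
  have hV : ∀ t ∈ Set.Ici (0:ℝ), HasDerivWithinAt (fun u => Lf α β u + 2 * kf β γ μ ν u)
      (LEx α β γ μ ν t + 2 * KEx α β γ μ ν t) (Set.Ici 0) t := by
    intro t ht
    exact ((core H ht).hL').add (((core H ht).hk').const_mul 2)
  have hbar : ∀ t ∈ Set.Ici (0:ℝ), 2 * kf β γ μ ν 0 ≤ Lf α β t + 2 * kf β γ μ ν t →
      LEx α β γ μ ν t + 2 * KEx α β γ μ ν t ≤ 0 := by
    intro t ht hge
    obtain ⟨hα, hβ, hγ, hd, _, _, _, _⟩ := core H ht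
    have hk0 : kf β γ μ ν t ≤ kf β γ μ ν 0 := k_antitone H self_mem_Ici ht ht
    have hL0 : 0 ≤ Lf α β t := by linarith
    have hba : α t ≤ β t := by
      have := beta_ge_of_L hα hβ one_pos (by rw [Real.log_one]; exact hL0)
      linarith
    have h1 := KEx_le H ht
    have h2 : LEx α β γ μ ν t + 2 * (-(2*ν t^2*α t/(Df β γ μ ν t)^2)) ≤ 0 := by
      unfold LEx
      have h3 : 3*(α t^2 - β t^2)/(α t * Df β γ μ ν t) ≤ 0 := by
        apply div_nonpos_of_nonpos_of_nonneg
        · nlinarith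
        · positivity
      have h4 : 4*α t*ν t^2/(Df β γ μ ν t)^2 = 2*(2*ν t^2*α t/(Df β γ μ ν t)^2) := by ring
      linarith [h3, h4]
    linarith
  intro t ht
  have := barrier_above hV hbar t ht
  have hknn := kf_nonneg H ht
  calc Lf α β t ≤ Lf α β t + 2 * kf β γ μ ν t := by linarith
    _ ≤ max ((Lf α β 0 + 2 * kf β γ μ ν 0)) (2 * kf β γ μ ν 0) := this

/-- Lower bound on `L`. -/
lemma L_lb {α β γ μ ν : ℝ → ℝ} (H : IsAdmissibleSolutionA α β γ μ ν (Set.Ici 0)) :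
    ∀ t ∈ Set.Ici (0:ℝ), min (Lf α β 0) 0 ≤ Lf α β t := by
  apply barrier_below (fun t ht => (core H ht).hL')
  intro t ht hle
  obtain ⟨hα, hβ, hγ, hd, _, _, _, _⟩ := core H ht
  have hba : β t ≤ α t := by
    have := beta_le_of_L hα hβ one_pos (by rw [Real.log_one]; exact hle)
    linarith
  have h3 : 0 ≤ 3*(α t^2 - β t^2)/(α t * Df β γ μ ν t) := by
    apply div_nonneg _ (by positivity)
    nlinarith
  have h4 : 0 ≤ 4*α t*ν t^2/(Df β γ μ ν t)^2 := by positivity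
  show 0 ≤ 3*(α t^2 - β t^2)/(α t * Df β γ μ ν t) + 4*α t*ν t^2/(Df β γ μ ν t)^2
  linarith

/-- `M2 = log α + (2/3) L` is nonincreasing. -/
lemma alpha_ub {α β γ μ ν : ℝ → ℝ} (H : IsAdmissibleSolutionA α β γ μ ν (Set.Ici 0)) :
    ∀ t ∈ Set.Ici (0:ℝ), Real.log (α t) ≤
      Real.log (α 0) + (2/3)*Lf α β 0 - (2/3)*min (Lf α β 0) 0 := by
  have hM : ∀ t ∈ Set.Ici (0:ℝ),
      HasDerivWithinAt (fun u => Real.log (α u) + (2/3) * Lf α β u)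
      ((-(2/3)*(3*(α t^2 - β t^2)/(α t * Df β γ μ ν t) + 4*α t*ν t^2/(Df β γ μ ν t)^2)
        - (4/3)*(α t*ν t^2/(Df β γ μ ν t)^2))
       + (2/3)*(3*(α t^2 - β t^2)/(α t * Df β γ μ ν t) + 4*α t*ν t^2/(Df β γ μ ν t)^2))
      (Set.Ici 0) t := by
    intro t ht
    exact ((core H ht).ha').add (((core H ht).hL').const_mul (2/3))
  have hM0 : ∀ t ∈ Set.Ici (0:ℝ),
      (-(2/3)*(3*(α t^2 - β t^2)/(α t * Df β γ μ ν t) + 4*α t*ν t^2/(Df β γ μ ν t)^2)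
        - (4/3)*(α t*ν t^2/(Df β γ μ ν t)^2))
       + (2/3)*(3*(α t^2 - β t^2)/(α t * Df β γ μ ν t) + 4*α t*ν t^2/(Df β γ μ ν t)^2) ≤ 0 := by
    intro t ht
    obtain ⟨hα, hβ, hγ, hd, _, _, _, _⟩ := core H ht
    have h : (0:ℝ) ≤ (4/3)*(α t*ν t^2/(Df β γ μ ν t)^2) := by positivity
    linarith
  have hanti := anti_Ici hM hM0
  intro t ht
  have h1 := hanti self_mem_Ici ht ht
  simp only at h1
  have h2 := L_lb H t ht
  linarith

/-- `M1 = log α + (2/3) L - (2/3) k` is nondecreasing. -/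
lemma alpha_lb {α β γ μ ν : ℝ → ℝ} (H : IsAdmissibleSolutionA α β γ μ ν (Set.Ici 0)) :
    ∀ t ∈ Set.Ici (0:ℝ),
      Real.log (α 0) + (2/3)*Lf α β 0 - (2/3)*kf β γ μ ν 0
        - (2/3)*max (Lf α β 0 + 2 * kf β γ μ ν 0) (2 * kf β γ μ ν 0) ≤ Real.log (α t) := by
  have hM : ∀ t ∈ Set.Ici (0:ℝ),
      HasDerivWithinAt (fun u => Real.log (α u) + (2/3) * Lf α β u - (2/3) * kf β γ μ ν u)
      ((-(2/3)*(3*(α t^2 - β t^2)/(α t * Df β γ μ ν t) + 4*α t*ν t^2/(Df β γ μ ν t)^2)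
        - (4/3)*(α t*ν t^2/(Df β γ μ ν t)^2))
       + (2/3)*(3*(α t^2 - β t^2)/(α t * Df β γ μ ν t) + 4*α t*ν t^2/(Df β γ μ ν t)^2)
       - (2/3)*KEx α β γ μ ν t)
      (Set.Ici 0) t := by
    intro t ht
    exact (((core H ht).ha').add (((core H ht).hL').const_mul (2/3))).sub
      (((core H ht).hk').const_mul (2/3))
  have hM0 : ∀ t ∈ Set.Ici (0:ℝ), 0 ≤
      (-(2/3)*(3*(α t^2 - β t^2)/(α t * Df β γ μ ν t) + 4*α t*ν t^2/(Df β γ μ ν t)^2)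
        - (4/3)*(α t*ν t^2/(Df β γ μ ν t)^2))
       + (2/3)*(3*(α t^2 - β t^2)/(α t * Df β γ μ ν t) + 4*α t*ν t^2/(Df β γ μ ν t)^2)
       - (2/3)*KEx α β γ μ ν t := by
    intro t ht
    obtain ⟨hα, hβ, hγ, hd, _, _, _, _⟩ := core H ht
    have h1 := KEx_le H ht
    have h2 : (4/3)*(α t*ν t^2/(Df β γ μ ν t)^2)
        = (2/3)*(2*ν t^2*α t/(Df β γ μ ν t)^2) := by ring
    nlinarith
  have hmono := mono_Ici hM hM0
  intro t ht
  have h1 := hmono self_mem_Ici ht ht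
  simp only at h1
  have h2 := L_ub H t ht
  have h3 := kf_nonneg H ht
  linarith

lemma D_le_lin {α β γ μ ν : ℝ → ℝ} (H : IsAdmissibleSolutionA α β γ μ ν (Set.Ici 0))
    {Amax : ℝ} (hub : ∀ t ∈ Set.Ici (0:ℝ), α t ≤ Amax) :
    ∀ t ∈ Set.Ici (0:ℝ), Df β γ μ ν t ≤
      Df β γ μ ν 0 + (2*Amax + 4*Amax*kf β γ μ ν 0 + 1) * t := by
  set CD : ℝ := 2*Amax + 4*Amax*kf β γ μ ν 0 + 1 with hCD
  have hDlin : ∀ t ∈ Set.Ici (0:ℝ),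
      HasDerivWithinAt (fun u => Df β γ μ ν u - CD * u)
      ((2*α t - 4*β t + 4*α t*ν t^2/(Df β γ μ ν t)) - CD * 1) (Set.Ici 0) t := by
    intro t ht
    exact ((core H ht).hD').sub (((hasDerivAt_id t).const_mul CD).hasDerivWithinAt)
  have hneg : ∀ t ∈ Set.Ici (0:ℝ),
      ((2*α t - 4*β t + 4*α t*ν t^2/(Df β γ μ ν t)) - CD * 1) ≤ 0 := by
    intro t ht
    obtain ⟨hα, hβ, hγ, hd, _, _, _, _⟩ := core H ht
    have hq : 0 ≤ ν t^2/(Df β γ μ ν t) := div_nonneg (sq_nonneg _) hd.le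
    have hk : ν t^2/(Df β γ μ ν t) ≤ kf β γ μ ν 0 := k_antitone H self_mem_Ici ht ht
    have ha : α t ≤ Amax := hub t ht
    have he : 4*α t*ν t^2/(Df β γ μ ν t) = 4*(α t*(ν t^2/(Df β γ μ ν t))) := by ring
    rw [he, hCD]
    nlinarith [mul_nonneg (sub_nonneg.2 ha) hq, mul_nonneg (hα.le.trans ha) (sub_nonneg.2 hk)]
  have hanti := anti_Ici hDlin hneg
  intro t ht
  have h1 := hanti self_mem_Ici ht ht
  simp only [mul_zero, sub_zero] at h1
  linarith

lemma k_small {α β γ μ ν : ℝ → ℝ} (H : IsAdmissibleSolutionA α β γ μ ν (Set.Ici 0))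
    {Amin CD : ℝ} (hAmin : 0 < Amin) (hCD : 0 < CD)
    (hlb : ∀ t ∈ Set.Ici (0:ℝ), Amin ≤ α t)
    (hDle : ∀ t ∈ Set.Ici (0:ℝ), Df β γ μ ν t ≤ Df β γ μ ν 0 + CD * t)
    (ε : ℝ) (hε : 0 < ε) :
    ∃ T, 0 ≤ T ∧ kf β γ μ ν T ≤ ε := by
  by_contra hcon
  push_neg at hcon
  have hD0 : 0 < Df β γ μ ν 0 := (core H self_mem_Ici).hd
  set c7 : ℝ := 2*ε*Amin/CD with hc7
  have hc7pos : 0 < c7 := by positivity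
  set u : ℝ → ℝ := fun t => Df β γ μ ν 0 + CD * t with hu
  have hupos : ∀ t ∈ Set.Ici (0:ℝ), 0 < u t := by
    intro t ht
    have : (0:ℝ) ≤ CD * t := mul_nonneg hCD.le ht
    simp only [hu]; linarith
  have huderiv : ∀ t : ℝ, HasDerivAt u CD t := by
    intro t
    have := ((hasDerivAt_id t).const_mul CD).const_add (Df β γ μ ν 0)
    simpa [hu] using this
  have hW : ∀ t ∈ Set.Ici (0:ℝ),
      HasDerivWithinAt (fun v => kf β γ μ ν v + c7 * Real.log (u v))
      (KEx α β γ μ ν t + c7 * (CD / u t)) (Set.Ici 0) t := by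
    intro t ht
    exact ((core H ht).hk').add
      ((((huderiv t).log (ne_of_gt (hupos t ht))).hasDerivWithinAt.const_mul c7))
  have hWneg : ∀ t ∈ Set.Ici (0:ℝ), KEx α β γ μ ν t + c7 * (CD / u t) ≤ 0 := by
    intro t ht
    obtain ⟨hα, hβ, hγ, hd, _, _, _, _⟩ := core H ht
    have h1 := KEx_le H ht
    have hkt : ε < ν t^2/(Df β γ μ ν t) := hcon t ht
    have halb := hlb t ht
    have hut := hupos t ht
    have hdu : Df β γ μ ν t ≤ u t := hDle t ht
    have e1 : 2*ν t^2*α t/(Df β γ μ ν t)^2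
        = 2*((ν t^2/(Df β γ μ ν t))*(α t/(Df β γ μ ν t))) := by ring
    have e2 : c7 * (CD / u t) = 2*ε*(Amin/u t) := by
      rw [hc7]; field_simp
    have e3 : Amin/u t ≤ α t/(Df β γ μ ν t) :=
      div_le_div₀ hα.le halb hd hdu
    have e4 : ε*(Amin/u t) ≤ (ν t^2/(Df β γ μ ν t))*(α t/(Df β γ μ ν t)) :=
      mul_le_mul hkt.le e3 (by positivity) (by positivity)
    rw [e1] at h1
    rw [e2]
    linarith
  have hanti := anti_Ici hW hWneg
  -- pick a large time
  set M : ℝ := Real.log (Df β γ μ ν 0) + (kf β γ μ ν 0 + 1)/c7 with hM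
  set T : ℝ := Real.exp M / CD with hT
  have hTpos : 0 ≤ T := by positivity
  have hTmem : T ∈ Set.Ici (0:ℝ) := hTpos
  have huT : u T = Df β γ μ ν 0 + Real.exp M := by
    simp only [hu, hT]
    field_simp
  have hlogT : M < Real.log (u T) := by
    have h1 : Real.exp M < u T := by rw [huT]; linarith
    have h2 := Real.log_lt_log (Real.exp_pos M) h1
    rwa [Real.log_exp] at h2
  have h3 := hanti self_mem_Ici hTmem hTpos
  simp only at h3
  have h4 : Real.log (u 0) = Real.log (Df β γ μ ν 0) := by simp [hu]
  rw [h4] at h3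
  have h5 : c7 * M < c7 * Real.log (u T) := by
    exact (mul_lt_mul_iff_right₀ hc7pos).mpr hlogT
  have h6 : c7 * M = c7 * Real.log (Df β γ μ ν 0) + kf β γ μ ν 0 + 1 := by
    rw [hM]; field_simp; ring
  have h7 := hcon T hTmem
  have : kf β γ μ ν T ≤ -1 := by linarith
  linarith

lemma L_event {α β γ μ ν : ℝ → ℝ} (H : IsAdmissibleSolutionA α β γ μ ν (Set.Ici 0))
    {Amin CD : ℝ} (hAmin : 0 < Amin) (hCD : 0 < CD)
    (hlb : ∀ t ∈ Set.Ici (0:ℝ), Amin ≤ α t)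
    (hDle : ∀ t ∈ Set.Ici (0:ℝ), Df β γ μ ν t ≤ Df β γ μ ν 0 + CD * t) :
    ∃ T, 0 ≤ T ∧ Real.log (3/4) ≤ Lf α β T := by
  by_contra hcon
  push_neg at hcon
  have hD0 : 0 < Df β γ μ ν 0 := (core H self_mem_Ici).hd
  set q : ℝ := (21/16)*Amin/CD with hq
  have hqpos : 0 < q := by positivity
  set u : ℝ → ℝ := fun t => Df β γ μ ν 0 + CD * t with hu
  have hupos : ∀ t ∈ Set.Ici (0:ℝ), 0 < u t := by
    intro t ht
    have : (0:ℝ) ≤ CD * t := mul_nonneg hCD.le ht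
    simp only [hu]; linarith
  have huderiv : ∀ t : ℝ, HasDerivAt u CD t := by
    intro t
    have := ((hasDerivAt_id t).const_mul CD).const_add (Df β γ μ ν 0)
    simpa [hu] using this
  have hW : ∀ t ∈ Set.Ici (0:ℝ),
      HasDerivWithinAt (fun v => Lf α β v - q * Real.log (u v))
      ((3*(α t^2 - β t^2)/(α t * Df β γ μ ν t) + 4*α t*ν t^2/(Df β γ μ ν t)^2)
        - q * (CD / u t)) (Set.Ici 0) t := by
    intro t ht
    exact ((core H ht).hL').sub
      ((((huderiv t).log (ne_of_gt (hupos t ht))).hasDerivWithinAt.const_mul q))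
  have hWpos : ∀ t ∈ Set.Ici (0:ℝ), 0 ≤
      (3*(α t^2 - β t^2)/(α t * Df β γ μ ν t) + 4*α t*ν t^2/(Df β γ μ ν t)^2)
        - q * (CD / u t) := by
    intro t ht
    obtain ⟨hα, hβ, hγ, hd, _, _, _, _⟩ := core H ht
    have hba : β t ≤ (3/4) * α t :=
      beta_le_of_L hα hβ (by norm_num) (hcon t ht).le
    have halb := hlb t ht
    have hut := hupos t ht
    have hdu : Df β γ μ ν t ≤ u t := hDle t ht
    have e2 : q * (CD / u t) = (21/16)*(Amin/u t) := by
      rw [hq]; field_simp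
    have e3 : Amin/u t ≤ α t/(Df β γ μ ν t) :=
      div_le_div₀ hα.le halb hd hdu
    have hb2 : 21*α t^2 ≤ 48*(α t^2 - β t^2) := by nlinarith
    have e5 : (21/16)*(α t/(Df β γ μ ν t)) ≤ 3*(α t^2 - β t^2)/(α t * Df β γ μ ν t) := by
      rw [show (21:ℝ)/16*(α t/(Df β γ μ ν t)) = (21*α t)/(16*(Df β γ μ ν t)) by ring,
        div_le_div_iff₀ (by positivity) (by positivity)]
      nlinarith [mul_le_mul_of_nonneg_right hb2 hd.le, mul_pos hα hd]
    have e6 : 0 ≤ 4*α t*ν t^2/(Df β γ μ ν t)^2 := by positivity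
    rw [e2]
    nlinarith
  have hmono := mono_Ici hW hWpos
  set M : ℝ := Real.log (Df β γ μ ν 0) + (Real.log (3/4) - Lf α β 0 + 1)/q with hM
  set T : ℝ := Real.exp M / CD with hT
  have hTpos : 0 ≤ T := by positivity
  have hTmem : T ∈ Set.Ici (0:ℝ) := hTpos
  have huT : u T = Df β γ μ ν 0 + Real.exp M := by
    simp only [hu, hT]
    field_simp
  have hlogT : M < Real.log (u T) := by
    have h1 : Real.exp M < u T := by rw [huT]; linarith
    have h2 := Real.log_lt_log (Real.exp_pos M) h1
    rwa [Real.log_exp] at h2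
  have h3 := hmono self_mem_Ici hTmem hTpos
  simp only at h3
  have h4 : Real.log (u 0) = Real.log (Df β γ μ ν 0) := by simp [hu]
  rw [h4] at h3
  have h5 : q * M < q * Real.log (u T) := (mul_lt_mul_iff_right₀ hqpos).mpr hlogT
  have h6 : q * M = q * Real.log (Df β γ μ ν 0) + (Real.log (3/4) - Lf α β 0 + 1) := by
    rw [hM]; field_simp
  have h7 := hcon T hTmem
  set X := Real.log (u T) with hX
  set Y := Real.log (Df β γ μ ν 0) with hY
  clear_value X Y T M u q
  linarith only [h3, h5, h6, h7]

/-- There exist no differentiable functions `α β γ μ ν : [0,∞) → ℝ` forming an admissible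
solution of System A on all of `[0,∞)`: every homogeneous Ricci flow on
`SO(3) ⋉ ℝ³ / SO(2)` has a finite-time extinction. -/
theorem no_admissible_solution_systemA_on_Ici :
    ¬ ∃ α β γ μ ν : ℝ → ℝ, IsAdmissibleSolutionA α β γ μ ν (Set.Ici 0) := by
  rintro ⟨α, β, γ, μ, ν, H⟩
  have hα0 : 0 < α 0 := (core H self_mem_Ici).hα
  have hk0 : 0 ≤ kf β γ μ ν 0 := kf_nonneg H self_mem_Ici
  -- bounds on α
  obtain ⟨Amax, hAmax⟩ : ∃ x : ℝ, x = Real.exp (Real.log (α 0) + (2/3)*Lf α β 0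
      - (2/3)*min (Lf α β 0) 0) := ⟨_, rfl⟩
  obtain ⟨Amin, hAmin⟩ : ∃ x : ℝ, x = Real.exp (Real.log (α 0) + (2/3)*Lf α β 0
      - (2/3)*kf β γ μ ν 0
      - (2/3)*max (Lf α β 0 + 2 * kf β γ μ ν 0) (2 * kf β γ μ ν 0)) := ⟨_, rfl⟩
  have hAminpos : 0 < Amin := hAmin ▸ Real.exp_pos _
  have hAmaxpos : 0 < Amax := hAmax ▸ Real.exp_pos _
  have hub : ∀ t ∈ Set.Ici (0:ℝ), α t ≤ Amax := by
    intro t ht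
    have h1 := alpha_ub H t ht
    have h2 : α t = Real.exp (Real.log (α t)) := (Real.exp_log (core H ht).hα).symm
    rw [h2, hAmax]
    exact Real.exp_le_exp.mpr h1
  have hlb : ∀ t ∈ Set.Ici (0:ℝ), Amin ≤ α t := by
    intro t ht
    have h1 := alpha_lb H t ht
    have h2 : α t = Real.exp (Real.log (α t)) := (Real.exp_log (core H ht).hα).symm
    rw [h2, hAmin]
    exact Real.exp_le_exp.mpr h1
  -- linear growth of D
  obtain ⟨CD, hCDdef⟩ : ∃ x : ℝ, x = 2*Amax + 4*Amax*kf β γ μ ν 0 + 1 := ⟨_, rfl⟩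
  have hCD : 0 < CD := by
    rw [hCDdef]
    nlinarith
  have hDle : ∀ t ∈ Set.Ici (0:ℝ), Df β γ μ ν t ≤ Df β γ μ ν 0 + CD * t := by
    rw [hCDdef]; exact D_le_lin H hub
  -- eventual smallness of k and largeness of L
  obtain ⟨ε, hεdef⟩ : ∃ x : ℝ, x = Amin/(8*Amax) := ⟨_, rfl⟩
  have hε : 0 < ε := by rw [hεdef]; positivity
  obtain ⟨T1, hT1, hkT1⟩ := k_small H hAminpos hCD hlb hDle ε hε
  obtain ⟨T2, hT2, hLT2⟩ := L_event H hAminpos hCD hlb hDle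
  -- persistence of L ≥ log (3/4) on [T2, ∞)
  have hsub2 : Set.Ici T2 ⊆ Set.Ici (0:ℝ) := Set.Ici_subset_Ici.mpr hT2
  have hLpers : ∀ t ∈ Set.Ici T2, Real.log (3/4) ≤ Lf α β t := by
    have hbar := barrier_below (a := T2) (c := Real.log (3/4))
      (f := Lf α β)
      (f' := fun t => 3*(α t^2 - β t^2)/(α t * Df β γ μ ν t)
        + 4*α t*ν t^2/(Df β γ μ ν t)^2)
      (fun t ht => ((core H (hsub2 ht)).hL').mono hsub2) ?_
    · intro t ht
      have := hbar t ht
      rw [min_eq_right hLT2] at this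
      exact this
    · intro t ht hle
      obtain ⟨hαt, hβt, hγt, hdt, _, _, _, _⟩ := core H (hsub2 ht)
      have hba : β t ≤ α t := by
        have h34 : β t ≤ (3/4) * α t := beta_le_of_L hαt hβt (by norm_num) hle
        linarith
      have h3 : 0 ≤ 3*(α t^2 - β t^2)/(α t * Df β γ μ ν t) := by
        apply div_nonneg _ (by positivity)
        nlinarith
      have h4 : 0 ≤ 4*α t*ν t^2/(Df β γ μ ν t)^2 := by positivity
      linarith
  -- the final decay of D
  obtain ⟨T3, hT3def⟩ : ∃ x : ℝ, x = max T1 T2 := ⟨_, rfl⟩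
  have hT3 : 0 ≤ T3 := hT3def ▸ le_trans hT1 (le_max_left _ _)
  have hsub3 : Set.Ici T3 ⊆ Set.Ici (0:ℝ) := Set.Ici_subset_Ici.mpr hT3
  have hfin : ∀ t ∈ Set.Ici T3, HasDerivWithinAt
      (fun u => Df β γ μ ν u + (Amin/2) * u)
      ((2*α t - 4*β t + 4*α t*ν t^2/(Df β γ μ ν t)) + (Amin/2) * 1) (Set.Ici T3) t := by
    intro t ht
    exact (((core H (hsub3 ht)).hD').mono hsub3).add
      (((hasDerivAt_id t).const_mul (Amin/2)).hasDerivWithinAt)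
  have hfneg : ∀ t ∈ Set.Ici T3,
      (2*α t - 4*β t + 4*α t*ν t^2/(Df β γ μ ν t)) + (Amin/2) * 1 ≤ 0 := by
    intro t ht
    obtain ⟨hαt, hβt, hγt, hdt, _, _, _, _⟩ := core H (hsub3 ht)
    have ht1 : T1 ≤ t := le_trans (hT3def ▸ le_max_left T1 T2) ht
    have ht2 : T2 ≤ t := le_trans (hT3def ▸ le_max_right T1 T2) ht
    have hkt : ν t^2/(Df β γ μ ν t) ≤ ε := by
      have := k_antitone H hT1 (hsub3 ht) ht1
      exact le_trans this hkT1
    have hqnn : 0 ≤ ν t^2/(Df β γ μ ν t) := div_nonneg (sq_nonneg _) hdt.le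
    have hβge : (3/4) * α t ≤ β t :=
      beta_ge_of_L hαt hβt (by norm_num) (hLpers t ht2)
    have halb := hlb t (hsub3 ht)
    have haub := hub t (hsub3 ht)
    have hAε : 4*Amax*ε = Amin/2 := by
      rw [hεdef]; field_simp; ring
    have he : 4*α t*ν t^2/(Df β γ μ ν t) = 4*(α t*(ν t^2/(Df β γ μ ν t))) := by ring
    rw [he]
    nlinarith [mul_nonneg (sub_nonneg.2 haub) hqnn,
      mul_nonneg hAmaxpos.le (sub_nonneg.2 hkt)]
  have hanti := anti_Ici hfin hfneg
  obtain ⟨T4, hT4def⟩ : ∃ x : ℝ, x = T3 + 2*(Df β γ μ ν T3)/Amin + 1 := ⟨_, rfl⟩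
  have hD3 : 0 < Df β γ μ ν T3 := (core H (hsub3 self_mem_Ici)).hd
  have hT4 : T3 ≤ T4 := by
    rw [hT4def]
    have : 0 ≤ 2*(Df β γ μ ν T3)/Amin := by positivity
    linarith
  have h5 := hanti self_mem_Ici hT4 hT4
  simp only at h5
  have hD4 : 0 < Df β γ μ ν T4 := (core H (hsub3 hT4)).hd
  have h6 : (Amin/2) * T4 = (Amin/2) * T3 + Df β γ μ ν T3 + Amin/2 := by
    rw [hT4def]; field_simp
  linarith
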